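/- For every positive weight vector w, the function P^w(g,v) = Σ_{g'⊆g} λ_{g'}(v) / (Σ_{j∈N(g')} w_j) (with the empty network term interpreted as 0) satisfies P^w(∅,v)=0 and w_i (P^w(g,v) − P^w(g \ g_i, v)) = Y_i^{w-MV}(g,v) for every player i ∈ N(g), and consequently Σ_{i∈N(g)} w_i (P^w(g,v) − P^w(g\g_i,v)) = v(g). -/
import Mathlib


open Finset

variable {n : ℕ}

/-- A network on player set `Fin n`: a finite set of (unordered) links. -/
abbrev Network (n : ℕ) := Finset (Sym2 (Fin n))

/-- The set of non-isolated players of a network. -/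
def players (g : Network n) : Finset (Fin n) :=
  Finset.univ.filter (fun i => ∃ e ∈ g, i ∈ e)

/-- Harsanyi dividend of a value function at a network. -/
noncomputable def dividend (v : Network n → ℝ) (g' : Network n) : ℝ :=
  ∑ g'' ∈ g'.powerset, (-1 : ℝ) ^ (g'.card - g''.card) * v g''

/-- The weighted Myerson value. -/
noncomputable def wMV (w : Fin n → ℝ) (v : Network n → ℝ) (g : Network n) (i : Fin n) : ℝ :=
  ∑ g' ∈ g.powerset.filter (fun g' => i ∈ players g'),
    (w i / ∑ j ∈ players g', w j) * dividend v g'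

/-- Connectivity of two players through links of `g`. -/
def connectedIn (g : Network n) (i j : Fin n) : Prop :=
  Relation.ReflTransGen (fun a b => s(a, b) ∈ g) i j

open Classical in
/-- The component of `g` containing the link `e`. -/
noncomputable def component (g : Network n) (e : Sym2 (Fin n)) : Network n :=
  g.filter (fun e' => ∃ i ∈ e, ∃ j ∈ e', connectedIn g i j)

/-- The set of components (maximal connected subnetworks) of `g`. -/
noncomputable def components (g : Network n) : Finset (Network n) :=
  g.image (component g)

/-- Component additive value functions. -/
def componentAdditive (v : Network n → ℝ) : Prop :=
  ∀ g : Network n, v g = ∑ h ∈ components g, v h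

open Classical in
/-- The restriction `g|_S` of a network to a coalition `S`. -/
noncomputable def restrict (g : Network n) (S : Finset (Fin n)) : Network n :=
  g.filter (fun e => ∀ i ∈ e, i ∈ S)

/-- The set `g_i` of links of player `i` in `g`. -/
def glinks (g : Network n) (i : Fin n) : Network n :=
  g.filter (fun e => i ∈ e)

/-- The weighted player potential function. -/
noncomputable def Pw (w : Fin n → ℝ) (v : Network n → ℝ) (g : Network n) : ℝ :=
  ∑ g' ∈ g.powerset.filter (fun g' => g' ≠ ∅),
    dividend v g' / ∑ j ∈ players g', w j


private lemma mem_players' {g : Network n} {i : Fin n} : i ∈ players g ↔ ∃ e ∈ g, i ∈ e := by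
  simp [players]

private lemma players_mono' {g' g : Network n} (h : g' ⊆ g) : players g' ⊆ players g := by
  intro i hi
  rw [mem_players'] at hi ⊢
  obtain ⟨e, he, hie⟩ := hi
  exact ⟨e, h he, hie⟩

private lemma players_empty' : players (∅ : Network n) = ∅ := by simp [players]

private lemma players_nonempty' {g : Network n} (h : g ≠ ∅) : (players g).Nonempty := by
  obtain ⟨e, he⟩ := Finset.nonempty_iff_ne_empty.mpr h
  induction e using Sym2.ind with
  | _ a b => exact ⟨a, mem_players'.mpr ⟨s(a, b), he, Sym2.mem_mk_left a b⟩⟩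

private lemma dividend_empty' (v : Network n → ℝ) : dividend v ∅ = v ∅ := by
  simp [dividend]

private lemma sum_dividend' (v : Network n → ℝ) (g : Network n) :
    ∑ g' ∈ g.powerset, dividend v g' = v g := by
  classical
  have step1 : ∀ g' ∈ g.powerset, dividend v g'
      = ∑ g'' ∈ g.powerset, if g'' ⊆ g' then (-1 : ℝ) ^ (g'.card - g''.card) * v g'' else 0 := by
    intro g' hg'
    rw [Finset.mem_powerset] at hg'
    rw [dividend, ← Finset.sum_filter]
    apply Finset.sum_congr _ (fun _ _ => rfl)
    ext t
    simp only [Finset.mem_powerset, Finset.mem_filter]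
    exact ⟨fun h => ⟨h.trans hg', h⟩, fun h => h.2⟩
  rw [Finset.sum_congr rfl step1, Finset.sum_comm]
  have step2 : ∀ g'' ∈ g.powerset,
      (∑ g' ∈ g.powerset, if g'' ⊆ g' then (-1 : ℝ) ^ (g'.card - g''.card) * v g'' else 0)
      = if g'' = g then v g else 0 := by
    intro g'' hg''
    rw [Finset.mem_powerset] at hg''
    rw [← Finset.sum_filter]
    have himg : g.powerset.filter (fun g' => g'' ⊆ g')
        = (g \ g'').powerset.image (fun t => g'' ∪ t) := by
      ext g'
      simp only [Finset.mem_filter, Finset.mem_powerset, Finset.mem_image]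
      constructor
      · rintro ⟨h1, h2⟩
        exact ⟨g' \ g'', Finset.sdiff_subset_sdiff h1 Finset.Subset.rfl,
          Finset.union_sdiff_of_subset h2⟩
      · rintro ⟨t, ht, rfl⟩
        exact ⟨Finset.union_subset hg'' (ht.trans Finset.sdiff_subset),
          Finset.subset_union_left⟩
    have hinj : ∀ t1 ∈ (g \ g'').powerset, ∀ t2 ∈ (g \ g'').powerset,
        g'' ∪ t1 = g'' ∪ t2 → t1 = t2 := by
      intro t1 ht1 t2 ht2 heq
      rw [Finset.mem_powerset] at ht1 ht2
      have hd1 : Disjoint g'' t1 := (Finset.disjoint_sdiff.mono_right ht1)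
      have hd2 : Disjoint g'' t2 := (Finset.disjoint_sdiff.mono_right ht2)
      rw [← Finset.union_sdiff_cancel_left hd1, heq, Finset.union_sdiff_cancel_left hd2]
    rw [himg, Finset.sum_image hinj]
    have hcard : ∀ t ∈ (g \ g'').powerset,
        (-1 : ℝ) ^ ((g'' ∪ t).card - g''.card) * v g'' = (-1 : ℝ) ^ t.card * v g'' := by
      intro t ht
      rw [Finset.mem_powerset] at ht
      have hd : Disjoint g'' t := (Finset.disjoint_sdiff.mono_right ht)
      rw [Finset.card_union_of_disjoint hd, Nat.add_sub_cancel_left]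
    rw [Finset.sum_congr rfl hcard, ← Finset.sum_mul]
    have hsign : (∑ t ∈ (g \ g'').powerset, (-1 : ℝ) ^ t.card)
        = if g \ g'' = ∅ then 1 else 0 := by
      have h := Finset.sum_powerset_neg_one_pow_card (x := g \ g'')
      have h2 : ((∑ t ∈ (g \ g'').powerset, (-1 : ℤ) ^ t.card : ℤ) : ℝ)
          = ∑ t ∈ (g \ g'').powerset, (-1 : ℝ) ^ t.card := by
        push_cast
        rfl
      rw [← h2, h]
      split <;> simp
    rw [hsign]
    by_cases hc : g'' = g
    · subst hc
      simp
    · have hne : g \ g'' ≠ ∅ := fun h =>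
        hc (Finset.Subset.antisymm hg'' (Finset.sdiff_eq_empty_iff_subset.mp h))
      simp [hne, hc]
  rw [Finset.sum_congr rfl step2]
  simp

/-- `Pw` is a weighted player potential function whose weighted marginal contributions
are the weighted Myerson payoffs. -/
theorem Pw_potential (w : Fin n → ℝ) (hw : ∀ k, 0 < w k)
    (v : Network n → ℝ) (hv : v ∅ = 0) :
    Pw w v (∅ : Network n) = 0 ∧
    ∀ g : Network n,
      (∀ i ∈ players g, w i * (Pw w v g - Pw w v (g \ glinks g i)) = wMV w v g i) ∧
      ∑ i ∈ players g, w i * (Pw w v g - Pw w v (g \ glinks g i)) = v g := by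
  classical
  constructor
  · simp [Pw, Finset.filter_singleton]
  · intro g
    have key : ∀ i ∈ players g,
        w i * (Pw w v g - Pw w v (g \ glinks g i)) = wMV w v g i := by
      intro i hi
      have hsdiff : ∀ g' : Network n, g' ⊆ g \ glinks g i ↔ g' ⊆ g ∧ i ∉ players g' := by
        intro g'
        simp only [glinks, Finset.subset_iff, Finset.mem_sdiff, Finset.mem_filter,
          mem_players', not_exists]
        constructor
        · intro h
          exact ⟨fun {e} he => (h he).1, fun e hh => (h hh.1).2 ⟨(h hh.1).1, hh.2⟩⟩
        · rintro ⟨h1, h2⟩ e he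
          exact ⟨h1 he, fun hh => h2 e ⟨he, hh.2⟩⟩
      have hsub : (g \ glinks g i).powerset.filter (fun g' => g' ≠ ∅)
          = (g.powerset.filter (fun g' => g' ≠ ∅)).filter (fun g' => ¬ i ∈ players g') := by
        ext g'
        simp only [Finset.mem_filter, Finset.mem_powerset, hsdiff]
        tauto
      have hPdiff : Pw w v g - Pw w v (g \ glinks g i)
          = ∑ g' ∈ (g.powerset.filter (fun g' => g' ≠ ∅)).filter (fun g' => i ∈ players g'),
              dividend v g' / ∑ j ∈ players g', w j := by
        unfold Pw
        rw [← Finset.sum_filter_add_sum_filter_not (g.powerset.filter (fun g' => g' ≠ ∅))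
          (fun g' => i ∈ players g'), hsub]
        ring
      have hfil : g.powerset.filter (fun g' => i ∈ players g')
          = (g.powerset.filter (fun g' => g' ≠ ∅)).filter (fun g' => i ∈ players g') := by
        rw [Finset.filter_filter]
        apply Finset.filter_congr
        intro g' _
        constructor
        · intro h
          refine ⟨fun h0 => ?_, h⟩
          subst h0
          rw [players_empty'] at h
          exact absurd h (Finset.notMem_empty i)
        · exact fun h => h.2
      rw [hPdiff, wMV, hfil, Finset.mul_sum]
      exact Finset.sum_congr rfl fun g' _ => by ring
    refine ⟨key, ?_⟩
    rw [Finset.sum_congr rfl key]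
    unfold wMV
    simp_rw [Finset.sum_filter]
    rw [Finset.sum_comm, ← sum_dividend' v g]
    apply Finset.sum_congr rfl
    intro g' hg'
    rw [Finset.mem_powerset] at hg'
    rw [← Finset.sum_filter, Finset.filter_mem_eq_inter,
      Finset.inter_eq_right.mpr (players_mono' hg')]
    by_cases h0 : g' = ∅
    · subst h0
      simp [players_empty', dividend_empty', hv]
    · have hW : 0 < ∑ j ∈ players g', w j :=
        Finset.sum_pos (fun j _ => hw j) (players_nonempty' h0)
      rw [← Finset.sum_mul, ← Finset.sum_div, div_self hW.ne', one_mul]
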